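/- Let g be a finite-dimensional real Lie algebra and let K be the Lie algebra C^∞(M, g) of smooth g-valued functions on a manifold M with pointwise bracket. Then the derived algebra [K, K] equals C^∞(M, [g,g]). -/

import Mathlib

open scoped Manifold

/-- Let `g` be a finite-dimensional real Lie algebra and `K = C^∞(M, g)` the Lie algebra of
smooth `g`-valued functions on a manifold `M` with pointwise bracket (smoothness is read off
through the coordinates of a basis `b` of `g`).  Then the derived algebra `[K, K]`, i.e. the
span of pointwise brackets of smooth functions, equals `C^∞(M, [g,g])`, the set of smooth
functions with values in the derived ideal of `g`. -/
theorem stmt5 {E : Type*} [NormedAddCommGroup E] [NormedSpace ℝ E]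
    {H : Type*} [TopologicalSpace H] (I : ModelWithCorners ℝ E H)
    {M : Type*} [TopologicalSpace M] [ChartedSpace H M] [IsManifold I (⊤ : ℕ∞) M]
    {g : Type*} [LieRing g] [LieAlgebra ℝ g] [FiniteDimensional ℝ g]
    {ι : Type*} [Fintype ι] (b : Module.Basis ι ℝ g) :
    (Submodule.span ℝ
        {h : M → g | ∃ f₁ f₂ : M → g,
          ContMDiff I 𝓘(ℝ, ι → ℝ) (⊤ : ℕ∞) (fun x => b.equivFun (f₁ x)) ∧
          ContMDiff I 𝓘(ℝ, ι → ℝ) (⊤ : ℕ∞) (fun x => b.equivFun (f₂ x)) ∧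
          h = fun x => ⁅f₁ x, f₂ x⁆} : Set (M → g)) =
      {h : M → g | ContMDiff I 𝓘(ℝ, ι → ℝ) (⊤ : ℕ∞) (fun x => b.equivFun (h x)) ∧
        ∀ x, h x ∈ LieAlgebra.derivedSeries ℝ g 1} := by
  classical
  set S : Set (M → g) :=
    {h : M → g | ∃ f₁ f₂ : M → g,
          ContMDiff I 𝓘(ℝ, ι → ℝ) (⊤ : ℕ∞) (fun x => b.equivFun (f₁ x)) ∧
          ContMDiff I 𝓘(ℝ, ι → ℝ) (⊤ : ℕ∞) (fun x => b.equivFun (f₂ x)) ∧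
          h = fun x => ⁅f₁ x, f₂ x⁆} with hS
  have hD : LieAlgebra.derivedSeries ℝ g 1 = ⁅(⊤ : LieIdeal ℝ g), ⊤⁆ := by
    rw [LieAlgebra.derivedSeries_def, LieAlgebra.derivedSeriesOfIdeal_succ,
      LieAlgebra.derivedSeriesOfIdeal_zero]
  -- the bracket in coordinates, as a continuous bilinear map
  let β : (ι → ℝ) →ₗ[ℝ] (ι → ℝ) →ₗ[ℝ] (ι → ℝ) :=
    LinearMap.mk₂ ℝ (fun u v => b.equivFun ⁅b.equivFun.symm u, b.equivFun.symm v⁆)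
      (by intro u u' v; simp only [map_add, add_lie])
      (by intro r u v; simp only [map_smul, smul_lie])
      (by intro u v v'; simp only [map_add, lie_add])
      (by intro r u v; simp only [map_smul, lie_smul])
  let e : ((ι → ℝ) →ₗ[ℝ] (ι → ℝ)) ≃ₗ[ℝ] ((ι → ℝ) →L[ℝ] (ι → ℝ)) :=
    LinearMap.toContinuousLinearMap
  let L : (ι → ℝ) →L[ℝ] ((ι → ℝ) →L[ℝ] (ι → ℝ)) :=
    LinearMap.toContinuousLinearMap (e.toLinearMap ∘ₗ β)
  have hLapp : ∀ u v : g, L (b.equivFun u) (b.equivFun v) = b.equivFun ⁅u, v⁆ := by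
    intro u v
    simp only [L, e, β, LinearMap.coe_toContinuousLinearMap', LinearMap.coe_comp,
      Function.comp_apply, LinearEquiv.coe_coe, LinearMap.mk₂_apply,
      LinearEquiv.symm_apply_apply]
  apply Set.Subset.antisymm
  · -- forward inclusion
    let T : Submodule ℝ (M → g) :=
      { carrier := {h : M → g | ContMDiff I 𝓘(ℝ, ι → ℝ) (⊤ : ℕ∞) (fun x => b.equivFun (h x)) ∧
          ∀ x, h x ∈ LieAlgebra.derivedSeries ℝ g 1}
        zero_mem' := ⟨by simpa using contMDiff_const, fun x => by simp⟩
        add_mem' := by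
          rintro a c ⟨ha1, ha2⟩ ⟨hc1, hc2⟩
          exact ⟨by simp only [Pi.add_apply, map_add]; exact ha1.add hc1, fun x => add_mem (ha2 x) (hc2 x)⟩
        smul_mem' := by
          rintro r a ⟨ha1, ha2⟩
          refine ⟨?_, fun x => Submodule.smul_mem _ r (ha2 x)⟩
          simp only [Pi.smul_apply, map_smul]; exact (contMDiff_const (I' := 𝓘(ℝ, ℝ)) (c := r)).smul ha1 }
    have : Submodule.span ℝ S ≤ T := by
      rw [Submodule.span_le]
      rintro h ⟨f₁, f₂, hf₁, hf₂, rfl⟩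
      constructor
      · have h1 : ContMDiff I 𝓘(ℝ, (ι → ℝ) →L[ℝ] (ι → ℝ)) (⊤ : ℕ∞)
            (fun x => L (b.equivFun (f₁ x))) := L.contMDiff.comp hf₁
        have h2 := h1.clm_apply hf₂
        have : (fun x => L (b.equivFun (f₁ x)) (b.equivFun (f₂ x)))
            = fun x => b.equivFun ⁅f₁ x, f₂ x⁆ := by
          funext x; exact hLapp _ _
        rwa [this] at h2
      · intro x
        rw [hD]
        exact LieSubmodule.lie_mem_lie (LieSubmodule.mem_top _) (LieSubmodule.mem_top _)
    exact this
  · -- reverse inclusion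
    rintro h ⟨hsm, hmem⟩
    -- key lemma: smooth scalar multiple of an element of the derived ideal lies in the span
    have key : ∀ a : M → ℝ, ContMDiff I 𝓘(ℝ, ℝ) (⊤ : ℕ∞) a → ∀ z : g,
        z ∈ LieAlgebra.derivedSeries ℝ g 1 → (fun x => a x • z) ∈ Submodule.span ℝ S := by
      intro a ha z hz
      have hz' : z ∈ Submodule.span ℝ
          {m : g | ∃ x ∈ (⊤ : LieIdeal ℝ g), ∃ n ∈ (⊤ : LieIdeal ℝ g), ⁅x, n⁆ = m} := by
        rw [← LieSubmodule.lieIdeal_oper_eq_linear_span', ← hD]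
        exact hz
      refine Submodule.span_induction ?_ ?_ ?_ ?_ hz'
      · rintro m ⟨u, -, v, -, rfl⟩
        apply Submodule.subset_span
        refine ⟨fun x => a x • u, fun _ => v, ?_, ?_, ?_⟩
        · simp only [map_smul]; exact ha.smul (contMDiff_const (c := b.equivFun u))
        · exact contMDiff_const
        · funext x; rw [smul_lie]
      · have : (fun x => a x • (0 : g)) = (0 : M → g) := by funext x; simp
        rw [this]; exact Submodule.zero_mem _
      · intro z₁ z₂ _ _ h₁ h₂
        have : (fun x => a x • (z₁ + z₂))
            = (fun x => a x • z₁) + fun x => a x • z₂ := by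
          funext x; simp [smul_add]
        rw [this]; exact Submodule.add_mem _ h₁ h₂
      · intro r z' _ h'
        have : (fun x => a x • r • z') = r • fun x => a x • z' := by
          funext x; simp [smul_comm r (a x)]
        rw [this]; exact Submodule.smul_mem _ r h'
    -- decompose h via a basis of the derived ideal
    set D' : Submodule ℝ g := ((LieAlgebra.derivedSeries ℝ g 1 : LieIdeal ℝ g) : Submodule ℝ g) with hD'
    let n : ℕ := Module.finrank ℝ D'
    let c : Module.Basis (Fin n) ℝ D' := Module.finBasis ℝ D'
    obtain ⟨p, hp⟩ := D'.subtype.exists_leftInverse_of_injective D'.ker_subtype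
    have hpp : ∀ v : g, ∀ hv : v ∈ D', p v = ⟨v, hv⟩ := by
      intro v hv
      have := LinearMap.congr_fun hp ⟨v, hv⟩
      simpa using this
    -- coordinates of h in the basis c, composed with the projection p
    let a : Fin n → M → ℝ := fun i x => c.equivFun (p (h x)) i
    have ha : ∀ i, ContMDiff I 𝓘(ℝ, ℝ) (⊤ : ℕ∞) (a i) := by
      intro i
      let ℓ : (ι → ℝ) →L[ℝ] ℝ := LinearMap.toContinuousLinearMap
        ((LinearMap.proj i) ∘ₗ (c.equivFun.toLinearMap ∘ₗ (p ∘ₗ b.equivFun.symm.toLinearMap)))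
      have : a i = fun x => ℓ (b.equivFun (h x)) := by
        funext x
        simp only [a, ℓ, LinearMap.coe_toContinuousLinearMap', LinearMap.coe_comp,
          Function.comp_apply, LinearEquiv.coe_coe, LinearEquiv.symm_apply_apply,
          LinearMap.proj_apply, Module.Basis.equivFun_apply]
        have hx : b.equivFun.symm ⇑(b.repr (h x)) = h x := by
          rw [← Module.Basis.equivFun_apply]; exact b.equivFun.symm_apply_apply _
        rw [hx]
      rw [this]
      exact ℓ.contMDiff.comp hsm
    have hdec : h = ∑ i, fun x => a i x • (c i : g) := by
      funext x
      have h1 : h x = ((p (h x) : D') : g) := by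
        rw [hpp (h x) (hmem x)]
      have h2 : (p (h x) : D') = ∑ i, a i x • c i := by
        conv_lhs => rw [← c.sum_equivFun (p (h x))]
      rw [Finset.sum_apply]
      rw [h1, h2]
      push_cast
      rfl
    rw [hdec]
    exact Submodule.sum_mem _ fun i _ => key (a i) (ha i) (c i) (c i).2
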